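/- Let ε ∈ (0,1] and k ≥ 1 be an integer, and run the Misra–Gries algorithm with ℓ = ⌈k + k/ε⌉ counters on a stream of n items. Then F_k − F̂_k ≤ ε R_k, and moreover f_j − f̂_j ≤ (ε/k) R_k for every item j. -/

import Mathlib

/-- One step of the Misra–Gries algorithm with `ℓ` counters.  The state is the
function giving the current counter value of each item (an item is a stored
label iff its counter is positive).  If the arriving item `a` matches a stored
label, its counter is incremented; otherwise, if fewer than `ℓ` counters are
in use, `a` is stored with counter `1`; otherwise all counters are decremented
by `1`.  Returns the new state together with whether a decrement occurred. -/
def mgStep (u ℓ : ℕ) (s : Fin u → ℕ) (a : Fin u) : (Fin u → ℕ) × Bool :=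
  if 0 < s a then (Function.update s a (s a + 1), false)
  else if (Finset.univ.filter fun j => 0 < s j).card < ℓ then
    (Function.update s a 1, false)
  else ((fun j => s j - 1), true)

/-- Run the Misra–Gries algorithm with `ℓ` counters on a stream, starting from
all counters empty.  Returns the final counter values `f̂` together with the
number `r` of stream steps at which the decrement operation occurred. -/
def mgRun (u ℓ : ℕ) (stream : List (Fin u)) : (Fin u → ℕ) × ℕ :=
  stream.foldl
    (fun p a => ((mgStep u ℓ p.1 a).1, p.2 + if (mgStep u ℓ p.1 a).2 then 1 else 0))
    ((fun _ => 0), 0)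

/-- Let `ε ∈ (0,1]` and `k ≥ 1`, and run the Misra–Gries algorithm with
`ℓ = ⌈k + k/ε⌉` counters on a stream of `n` items (from universe `[u]`,
indexed so that true frequencies `f_j` are non-increasing).  Then
`F_k - F̂_k ≤ ε R_k`, and moreover `f_j - f̂_j ≤ (ε/k) R_k` for every item `j`,
where `F_k = ∑_{j=1}^k f_j`, `F̂_k = ∑_{j=1}^k f̂_j` and
`R_k = ∑_{j=k+1}^u f_j`. -/
lemma mgStep_item (u ℓ : ℕ) (s : Fin u → ℕ) (a j : Fin u) :
    s j + (if a = j then 1 else 0) ≤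
      (mgStep u ℓ s a).1 j + (if (mgStep u ℓ s a).2 then 1 else 0) := by
  by_cases h1 : 0 < s a
  · rw [mgStep, if_pos h1]
    by_cases hj : a = j
    · subst hj; simp
    · simp [Function.update_of_ne (Ne.symm hj), hj]
  · by_cases h2 : (Finset.univ.filter fun j => 0 < s j).card < ℓ
    · rw [mgStep, if_neg h1, if_pos h2]
      by_cases hj : a = j
      · subst hj; simp; omega
      · simp [Function.update_of_ne (Ne.symm hj), hj]
    · rw [mgStep, if_neg h1, if_neg h2]
      by_cases hj : a = j
      · subst hj; simp; omega
      · simp [hj]; omega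

lemma mgStep_sum (u ℓ : ℕ) (s : Fin u → ℕ) (a : Fin u) :
    (∑ j, (mgStep u ℓ s a).1 j) + (if (mgStep u ℓ s a).2 then ℓ + 1 else 0)
      ≤ (∑ j, s j) + 1 := by
  have hsplit : s a + ∑ x ∈ Finset.univ.erase a, s x = ∑ j, s j :=
    Finset.add_sum_erase Finset.univ s (Finset.mem_univ a)
  by_cases h1 : 0 < s a
  · rw [mgStep, if_pos h1]
    simp only [if_neg Bool.false_ne_true, Bool.false_eq_true, if_false,
      Finset.sum_update_of_mem (Finset.mem_univ a), Finset.sdiff_singleton_eq_erase]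
    omega
  · by_cases h2 : (Finset.univ.filter fun j => 0 < s j).card < ℓ
    · rw [mgStep, if_neg h1, if_pos h2]
      simp only [Bool.false_eq_true, if_false,
        Finset.sum_update_of_mem (Finset.mem_univ a), Finset.sdiff_singleton_eq_erase]
      omega
    · rw [mgStep, if_neg h1, if_neg h2]
      simp only [if_true]
      have hsum : (∑ j, s j) = (∑ j, (s j - 1)) + (Finset.univ.filter fun j => 0 < s j).card := by
        rw [Finset.card_filter, ← Finset.sum_add_distrib]
        apply Finset.sum_congr rfl
        intro x _
        split_ifs with h <;> omega
      omega

lemma mgRun_invariant (u ℓ : ℕ) (stream : List (Fin u)) :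
    (∀ j, stream.count j ≤ (mgRun u ℓ stream).1 j + (mgRun u ℓ stream).2) ∧
    (∑ j, (mgRun u ℓ stream).1 j) + (mgRun u ℓ stream).2 * (ℓ + 1) ≤ stream.length := by
  induction stream using List.reverseRecOn with
  | nil => simp [mgRun]
  | append_singleton l a ih =>
    have hrw : mgRun u ℓ (l ++ [a]) =
        ((mgStep u ℓ (mgRun u ℓ l).1 a).1,
          (mgRun u ℓ l).2 + if (mgStep u ℓ (mgRun u ℓ l).1 a).2 then 1 else 0) := by
      simp [mgRun, List.foldl_append]
      congr
    obtain ⟨ih1, ih2⟩ := ih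
    constructor
    · intro j
      have h1 := mgStep_item u ℓ (mgRun u ℓ l).1 a j
      have h2 := ih1 j
      rw [hrw]
      have hc : (l ++ [a]).count j = l.count j + (if a = j then 1 else 0) := by
        by_cases hj : a = j
        · subst hj; simp
        · simp [List.count_append, List.count_singleton', beq_iff_eq, Ne.symm hj, hj]
      dsimp only
      rw [hc]
      split_ifs at h1 ⊢ <;> omega
    · have h1 := mgStep_sum u ℓ (mgRun u ℓ l).1 a
      rw [hrw]
      dsimp only
      simp only [List.length_append, List.length_singleton]
      split_ifs at h1 ⊢ with hb <;>
        simp only [add_mul, one_mul, add_zero] at h1 ⊢ <;> omega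

lemma length_eq_sum_count (u : ℕ) (l : List (Fin u)) : l.length = ∑ j, l.count j := by
  induction l with
  | nil => simp
  | cons a t ih =>
    simp only [List.count_cons, List.length_cons, Finset.sum_add_distrib, ← ih]
    simp

theorem misraGries_relative_error (u k : ℕ) (hk : 1 ≤ k)
    (ε : ℝ) (hε0 : 0 < ε) (hε1 : ε ≤ 1)
    (ℓ : ℕ) (hℓdef : ℓ = ⌈(k : ℝ) + (k : ℝ) / ε⌉₊)
    (stream : List (Fin u))
    (hsorted : ∀ i j : Fin u, i ≤ j → stream.count j ≤ stream.count i) :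
    (∑ j ∈ Finset.univ.filter (fun j : Fin u => (j : ℕ) < k),
        (stream.count j : ℝ)) -
      (∑ j ∈ Finset.univ.filter (fun j : Fin u => (j : ℕ) < k),
        ((mgRun u ℓ stream).1 j : ℝ)) ≤
      ε * ∑ j ∈ Finset.univ.filter (fun j : Fin u => k ≤ (j : ℕ)),
            (stream.count j : ℝ) ∧
    ∀ j : Fin u,
      (stream.count j : ℝ) - ((mgRun u ℓ stream).1 j : ℝ) ≤
        (ε / (k : ℝ)) * ∑ j ∈ Finset.univ.filter (fun j : Fin u => k ≤ (j : ℕ)),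
              (stream.count j : ℝ) := by
  obtain ⟨hitem, hsum⟩ := mgRun_invariant u ℓ stream
  set s := (mgRun u ℓ stream).1 with hs
  set r := (mgRun u ℓ stream).2 with hr
  set A := Finset.univ.filter (fun j : Fin u => (j : ℕ) < k) with hA
  set B := Finset.univ.filter (fun j : Fin u => k ≤ (j : ℕ)) with hB
  set R := ∑ j ∈ B, (stream.count j : ℝ) with hR
  have hk0 : (0 : ℝ) < k := by exact_mod_cast hk
  -- card bound
  have hK : A.card ≤ k := by
    have h1 : A.card ≤ (Finset.range k).card := by
      refine Finset.card_le_card_of_injOn (fun j => (j : ℕ)) ?_ ?_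
      · intro x hx
        simp only [hA, Finset.mem_filter, Finset.mem_univ, true_and] at hx
        simpa using hx
      · intro x _ y _ h
        exact Fin.ext h
    simpa using h1
  -- length splits
  have hlen : stream.length = (∑ j ∈ A, stream.count j) + (∑ j ∈ B, stream.count j) := by
    rw [length_eq_sum_count]
    rw [← Finset.sum_filter_add_sum_filter_not Finset.univ (fun j : Fin u => (j : ℕ) < k)]
    congr 1
    apply Finset.sum_congr _ (fun _ _ => rfl)
    ext j
    simp [hB, not_lt]
  have hFA : (∑ j ∈ A, stream.count j) ≤ (∑ j ∈ A, s j) + A.card * r := by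
    calc (∑ j ∈ A, stream.count j) ≤ ∑ j ∈ A, (s j + r) :=
          Finset.sum_le_sum (fun j _ => hitem j)
      _ = (∑ j ∈ A, s j) + A.card * r := by
          rw [Finset.sum_add_distrib, Finset.sum_const, smul_eq_mul]
  have hsub : (∑ j ∈ A, s j) ≤ ∑ j, s j :=
    Finset.sum_le_sum_of_subset (Finset.filter_subset _ _)
  -- real versions
  have hFAR : (∑ j ∈ A, (stream.count j : ℝ)) ≤ (∑ j ∈ A, (s j : ℝ)) + (A.card : ℝ) * r := by
    exact_mod_cast hFA
  have hsubR : (∑ j ∈ A, (s j : ℝ)) ≤ ∑ j, (s j : ℝ) := by exact_mod_cast hsub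
  have hsumR : (∑ j, (s j : ℝ)) + (r : ℝ) * ((ℓ : ℝ) + 1) ≤ (stream.length : ℝ) := by
    exact_mod_cast hsum
  have hlenR : (stream.length : ℝ) = (∑ j ∈ A, (stream.count j : ℝ)) + R := by
    rw [hR]; exact_mod_cast hlen
  have hAk : ((A.card : ℝ)) * r ≤ (k : ℝ) * r :=
    mul_le_mul_of_nonneg_right (by exact_mod_cast hK) (by positivity)
  have hkey : (r : ℝ) * ((ℓ : ℝ) + 1) ≤ (k : ℝ) * r + R := by linarith
  -- ℓ is large
  have hℓge : (k : ℝ) + (k : ℝ) / ε ≤ (ℓ : ℝ) := by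
    rw [hℓdef]; exact Nat.le_ceil _
  have h4 : (k : ℝ) / ε ≤ (ℓ : ℝ) + 1 - k := by linarith
  have h5 : (r : ℝ) * ((k : ℝ) / ε) ≤ (r : ℝ) * ((ℓ : ℝ) + 1 - k) :=
    mul_le_mul_of_nonneg_left h4 (by positivity)
  have h7 : (r : ℝ) * ((k : ℝ) / ε) ≤ R := by nlinarith
  have h8 : (r : ℝ) * k ≤ ε * R := by
    have h9 := mul_le_mul_of_nonneg_right h7 hε0.le
    have h10 : (r : ℝ) * ((k : ℝ) / ε) * ε = r * k := by field_simp
    nlinarith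
  have hrb : (r : ℝ) ≤ ε / (k : ℝ) * R := by
    rw [div_mul_eq_mul_div, le_div_iff₀ hk0]
    linarith
  constructor
  · have : (k : ℝ) * r ≤ ε * R := by linarith [h8]
    linarith
  · intro j
    have hj : (stream.count j : ℝ) ≤ (s j : ℝ) + r := by exact_mod_cast hitem j
    linarith
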